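/- Let l ≥ 1 and ν ≥ 1 be integers, let c_1, …, c_{ν−1} be real constants, let η > 0, q ∈ (1,2) and δ ≥ 0, and define C(s) = ((sᵀs)^{1−1/q} − η)/((sᵀs)^{1−1/q} + η) for s ∈ ℝ^l. For a sequence f : ℕ → ℝ^l let (Δf)(k) = f(k+1) − f(k) and let Δ^μ denote the μ-fold iterate. Let y, y^d, F, F̂, v : ℕ → ℝ^l, set e_k := y_k − y^d_k and s_k := (Δ^{ν−1}e)(k) + Σ_{i=1}^{ν−1} c_i (Δ^{ν−1−i}e)(k). Suppose (Δ^ν y)(k) = F_k + v_k for all k, that v_k = (Δ^ν y^d)(k) − (2η/((s_kᵀs_k)^{1−1/q} + η))·s_k − F̂_k − Σ_{i=1}^{ν−1} c_i (Δ^{ν−i}e)(k) for all k, and that ‖F̂_k − F_k‖ ≤ δ for all k. Then there exist a constant R > 0 (depending only on η, q and δ) and an integer N ∈ ℕ such that ‖s_k‖ ≤ R for all k ≥ N. -/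

import Mathlib

set_option maxHeartbeats 1000000


open scoped InnerProductSpace

/-- Forward finite difference of a sequence. -/
noncomputable def fdiff {l : ℕ} (f : ℕ → EuclideanSpace ℝ (Fin l)) : ℕ → EuclideanSpace ℝ (Fin l) :=
  fun k => f (k + 1) - f k

/-- The control gain function C of Lemma 2. -/
noncomputable def Cfun (l : ℕ) (η q : ℝ) (s : EuclideanSpace ℝ (Fin l)) : ℝ :=
  (⟪s, s⟫_ℝ ^ (1 - 1 / q) - η) / (⟪s, s⟫_ℝ ^ (1 - 1 / q) + η)

/-- The sliding variable s_k = e_k^{(ν-1)} + Σ_{i=1}^{ν-1} c_i e_k^{(ν-1-i)}. -/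
noncomputable def slide (l ν : ℕ) (c : ℕ → ℝ) (e : ℕ → EuclideanSpace ℝ (Fin l)) :
    ℕ → EuclideanSpace ℝ (Fin l) :=
  fun k => fdiff^[ν - 1] e k + ∑ i ∈ Finset.Icc 1 (ν - 1), c i • fdiff^[ν - 1 - i] e k

lemma fdiff_iter_apply_succ {l : ℕ} (f : ℕ → EuclideanSpace ℝ (Fin l)) (μ k : ℕ) :
    fdiff^[μ] f (k+1) = fdiff^[μ] f k + fdiff^[μ+1] f k := by
  rw [Function.iterate_succ_apply']
  simp [fdiff]

lemma fdiff_iter_sub {l : ℕ} (y yd : ℕ → EuclideanSpace ℝ (Fin l)) (n : ℕ) :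
    ∀ k, fdiff^[n] (fun j => y j - yd j) k = fdiff^[n] y k - fdiff^[n] yd k := by
  induction n with
  | zero => intro k; simp
  | succ n ih =>
    intro k
    rw [Function.iterate_succ_apply', Function.iterate_succ_apply',
      Function.iterate_succ_apply']
    simp only [fdiff, ih]
    abel

lemma slide_succ (l ν : ℕ) (hν : 1 ≤ ν) (c : ℕ → ℝ) (e : ℕ → EuclideanSpace ℝ (Fin l)) (k : ℕ) :
    slide l ν c e (k+1) = slide l ν c e k + fdiff^[ν] e k
      + ∑ i ∈ Finset.Icc 1 (ν - 1), c i • fdiff^[ν - i] e k := by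
  simp only [slide, fdiff_iter_apply_succ]
  have h1 : ν - 1 + 1 = ν := by omega
  rw [h1]
  have h2 : ∀ i ∈ Finset.Icc 1 (ν - 1),
      c i • (fdiff^[ν-1-i] e k + fdiff^[ν-1-i+1] e k)
        = c i • fdiff^[ν-1-i] e k + c i • fdiff^[ν-i] e k := by
    intro i hi
    simp only [Finset.mem_Icc] at hi
    have : ν - 1 - i + 1 = ν - i := by omega
    rw [this, smul_add]
  rw [Finset.sum_congr rfl h2, Finset.sum_add_distrib]
  abel

/-- Corollary 2 (robustness): a uniformly bounded ultra-local-model estimation error makes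
the sliding variable ultimately bounded, with a bound depending only on η, q and δ. -/
theorem stmt_16 (l ν : ℕ) (hl : 1 ≤ l) (hν : 1 ≤ ν) (c : ℕ → ℝ)
    (η q δ : ℝ) (hη : 0 < η) (hq : q ∈ Set.Ioo (1:ℝ) 2) (hδ : 0 ≤ δ) :
    ∃ R : ℝ, 0 < R ∧
      ∀ (y yd F Fhat v e s : ℕ → EuclideanSpace ℝ (Fin l)),
        (∀ k, e k = y k - yd k) →
        s = slide l ν c e →
        (∀ k, fdiff^[ν] y k = F k + v k) →
        (∀ k, v k = fdiff^[ν] yd k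
          - (2 * η / (⟪s k, s k⟫_ℝ ^ (1 - 1 / q) + η)) • s k
          - Fhat k
          - ∑ i ∈ Finset.Icc 1 (ν - 1), c i • fdiff^[ν - i] e k) →
        (∀ k, ‖Fhat k - F k‖ ≤ δ) →
        ∃ N : ℕ, ∀ k ≥ N, ‖s k‖ ≤ R := by
  obtain ⟨hq1, hq2⟩ := hq
  have hq0 : 0 < q := by linarith
  set σ : ℝ := 2 - 2 / q with hσdef
  have hσ0 : 0 < σ := by
    have : 2 / q < 2 := by rw [div_lt_iff₀ hq0]; nlinarith
    simp only [hσdef]; linarith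
  have hσ1 : σ < 1 := by
    have : 1 < 2 / q := by rw [lt_div_iff₀ hq0]; nlinarith
    simp only [hσdef]; linarith
  set M : ℝ := (δ + 1) * (1 + η) / (2 * η) with hMdef
  have hM0 : 0 < M := by positivity
  set R0 : ℝ := max 1 (max (η ^ (1/σ)) (M ^ (1/(1-σ)))) with hR0def
  have hR01 : (1:ℝ) ≤ R0 := le_max_left _ _
  refine ⟨R0 + δ, by linarith, ?_⟩
  intro y yd F Fhat v e s he hs hmodel hctrl herr
  -- the key recursion
  have key : ∀ k, s (k+1)
      = (1 - 2 * η / (⟪s k, s k⟫_ℝ ^ (1 - 1 / q) + η)) • s k - (Fhat k - F k) := by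
    intro k
    have hef : e = fun j => y j - yd j := funext he
    have hde : fdiff^[ν] e k = fdiff^[ν] y k - fdiff^[ν] yd k := by
      rw [hef]; exact fdiff_iter_sub y yd ν k
    have h1 : s (k+1) = s k + fdiff^[ν] e k
        + ∑ i ∈ Finset.Icc 1 (ν - 1), c i • fdiff^[ν - i] e k := by
      rw [hs]; exact slide_succ l ν hν c e k
    rw [h1, hde, hmodel k, hctrl k, sub_smul, one_smul]
    abel
  -- inner product as norm power
  have hinner : ∀ k, ⟪s k, s k⟫_ℝ ^ (1 - 1 / q) = ‖s k‖ ^ σ := by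
    intro k
    rw [real_inner_self_eq_norm_sq, ← Real.rpow_natCast (‖s k‖) 2,
      ← Real.rpow_mul (norm_nonneg _)]
    norm_num
    ring_nf
    congr 1; rw [hσdef]; ring
  -- step bound: each step grows by at most δ
  have hD : ∀ k, 0 < ‖s k‖ ^ σ + η := by
    intro k
    have := Real.rpow_nonneg (norm_nonneg (s k)) σ
    linarith
  have hstep : ∀ k, ‖s (k+1)‖ ≤ |1 - 2 * η / (‖s k‖ ^ σ + η)| * ‖s k‖ + δ := by
    intro k
    rw [key k, hinner k]
    calc ‖(1 - 2 * η / (‖s k‖ ^ σ + η)) • s k - (Fhat k - F k)‖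
        ≤ ‖(1 - 2 * η / (‖s k‖ ^ σ + η)) • s k‖ + ‖Fhat k - F k‖ := norm_sub_le _ _
      _ ≤ |1 - 2 * η / (‖s k‖ ^ σ + η)| * ‖s k‖ + δ := by
          rw [norm_smul, Real.norm_eq_abs]
          exact add_le_add le_rfl (herr k)
  have habs : ∀ k, |1 - 2 * η / (‖s k‖ ^ σ + η)| ≤ 1 := by
    intro k
    have h0 : 0 ≤ ‖s k‖ ^ σ := Real.rpow_nonneg (norm_nonneg _) σ
    have hDk := hD k
    have ht0 : 0 ≤ 2 * η / (‖s k‖ ^ σ + η) := by positivity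
    have ht2 : 2 * η / (‖s k‖ ^ σ + η) ≤ 2 := by
      rw [div_le_iff₀ hDk]; nlinarith
    rw [abs_le]; constructor <;> linarith
  have hA : ∀ k, ‖s (k+1)‖ ≤ ‖s k‖ + δ := by
    intro k
    have := hstep k
    have h1 : |1 - 2 * η / (‖s k‖ ^ σ + η)| * ‖s k‖ ≤ 1 * ‖s k‖ :=
      mul_le_mul_of_nonneg_right (habs k) (norm_nonneg _)
    rw [one_mul] at h1
    linarith
  -- decrease when large
  have hB : ∀ k, R0 ≤ ‖s k‖ → ‖s (k+1)‖ ≤ ‖s k‖ - 1 := by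
    intro k hk
    set x : ℝ := ‖s k‖ with hxdef
    have hx1 : (1:ℝ) ≤ x := le_trans hR01 hk
    have hx0 : (0:ℝ) < x := by linarith
    -- x^σ ≥ η
    have hxη : η ≤ x ^ σ := by
      have h1 : η ^ (1/σ) ≤ x := le_trans (le_trans (le_max_left _ _) (le_max_right _ _)) hk
      have h2 : (η ^ (1/σ)) ^ σ ≤ x ^ σ :=
        Real.rpow_le_rpow (Real.rpow_nonneg hη.le _) h1 hσ0.le
      rwa [← Real.rpow_mul hη.le, one_div_mul_cancel hσ0.ne', Real.rpow_one] at h2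
    -- x^(1-σ) ≥ M
    have hxM : M ≤ x ^ (1 - σ) := by
      have h1 : M ^ (1/(1-σ)) ≤ x := le_trans (le_trans (le_max_right _ _) (le_max_right _ _)) hk
      have h2 : (M ^ (1/(1-σ))) ^ (1-σ) ≤ x ^ (1-σ) :=
        Real.rpow_le_rpow (Real.rpow_nonneg hM0.le _) h1 (by linarith)
      rwa [← Real.rpow_mul hM0.le, one_div_mul_cancel (by linarith : (1:ℝ)-σ ≠ 0),
        Real.rpow_one] at h2
    have hx1σ : (1:ℝ) ≤ x ^ σ := by
      calc (1:ℝ) = 1 ^ σ := (Real.one_rpow σ).symm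
        _ ≤ x ^ σ := Real.rpow_le_rpow zero_le_one hx1 hσ0.le
    have hsplit : x ^ σ * x ^ (1 - σ) = x := by
      rw [← Real.rpow_add hx0]; norm_num
    have hDk : 0 < x ^ σ + η := hD k
    -- key inequality: 2ηx ≥ (δ+1)(x^σ+η)
    have hkey : (δ + 1) * (x ^ σ + η) ≤ 2 * η * x := by
      have hMeq : 2 * η * M = (δ + 1) * (1 + η) := by
        rw [hMdef, mul_div_assoc']; exact mul_div_cancel_left₀ _ (by positivity)
      have h2 : 2 * η * x ^ σ * M ≤ 2 * η * x ^ σ * (x ^ (1 - σ)) :=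
        mul_le_mul_of_nonneg_left hxM (by positivity)
      have h3 : (δ + 1) * (x ^ σ + η) ≤ (δ + 1) * ((1 + η) * x ^ σ) := by
        have : x ^ σ + η ≤ (1 + η) * x ^ σ := by nlinarith
        exact mul_le_mul_of_nonneg_left this (by linarith)
      calc (δ + 1) * (x ^ σ + η) ≤ (δ + 1) * ((1 + η) * x ^ σ) := h3
        _ = 2 * η * x ^ σ * M := by linear_combination (-(x ^ σ)) * hMeq
        _ ≤ 2 * η * x ^ σ * (x ^ (1 - σ)) := h2
        _ = 2 * η * x := by rw [mul_assoc, hsplit]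
    have ht1 : 2 * η / (x ^ σ + η) ≤ 1 := by
      rw [div_le_one hDk]; linarith
    have ht0 : 0 ≤ 2 * η / (x ^ σ + η) := by positivity
    have habs' : |1 - 2 * η / (x ^ σ + η)| = 1 - 2 * η / (x ^ σ + η) :=
      abs_of_nonneg (by linarith)
    have htx : δ + 1 ≤ (2 * η / (x ^ σ + η)) * x := by
      rw [div_mul_eq_mul_div, le_div_iff₀ hDk]
      nlinarith
    have := hstep k
    rw [← hxdef] at this
    rw [habs'] at this
    nlinarith [norm_nonneg (s k)]
  -- reach the ball
  have hreach : ∃ N, ‖s N‖ ≤ R0 + δ := by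
    by_contra h
    push_neg at h
    have hdesc : ∀ k : ℕ, ‖s k‖ ≤ ‖s 0‖ - k := by
      intro k
      induction k with
      | zero => simp
      | succ k ih =>
        have h1 : R0 ≤ ‖s k‖ := le_trans (by linarith) (h k).le
        have := hB k h1
        push_cast
        linarith
    obtain ⟨K, hK⟩ := exists_nat_ge (‖s 0‖ - R0 - δ)
    have := hdesc K
    have := h K
    linarith
  obtain ⟨N, hN⟩ := hreach
  refine ⟨N, ?_⟩
  intro k hk
  induction k, hk using Nat.le_induction with
  | base => exact hN
  | succ k hk ih =>
    rcases le_or_gt ‖s k‖ R0 with h1 | h1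
    · have := hA k; linarith
    · have := hB k h1.le; linarith
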